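/- arXiv:1105.5032 — 2 statements merged into one kernel-verified Lean document; each statement's English description precedes it below -/
import Mathlib

section
/- Let C and A be disjoint finite candidate sets with |C| ≥ 2, let L be a linear order on C ∪ A, and let V be a finite collection of linear-order votes on C ∪ A, each single-caved with respect to L. Let p ∈ C. Then there exists a set A' ⊆ A such that p is a plurality winner of the election (C ∪ A', V) if and only if p is a plurality winner of the election (C, V). (In particular, adding candidates can never make a losing candidate into a plurality winner in a single-caved electorate.) -/
variable {α : Type*} [DecidableEq α]

/-- `l` is a linear-order vote on the finite candidate set `s`:
a duplicate-free list containing exactly the elements of `s`;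
earlier in the list means more preferred (for a societal axis `L`,
earlier in the list means smaller in the order `L`). -/
def IsVoteOn (s : Finset α) (l : List α) : Prop :=
  l.Nodup ∧ ∀ a, a ∈ l ↔ a ∈ s

/-- `a` is ranked strictly before `b` in the list `l`. -/
def Prefers (l : List α) (a b : α) : Prop :=
  l.idxOf a < l.idxOf b

instance (l : List α) (a b : α) : Decidable (Prefers l a b) :=
  inferInstanceAs (Decidable (_ < _))

/-- `v` is single-peaked with respect to the societal axis `L`. -/
def SinglePeaked (L v : List α) : Prop :=
  ∀ c1 c2 c3, c1 ∈ L → c2 ∈ L → c3 ∈ L →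
    ((Prefers L c1 c2 ∧ Prefers L c2 c3) ∨ (Prefers L c3 c2 ∧ Prefers L c2 c1)) →
    Prefers v c1 c2 → Prefers v c2 c3

/-- `v` is single-caved with respect to the societal axis `L`. -/
def SingleCaved (L v : List α) : Prop :=
  ∀ c1 c2 c3, c1 ∈ L → c2 ∈ L → c3 ∈ L →
    ((Prefers L c1 c2 ∧ Prefers L c2 c3) ∨ (Prefers L c3 c2 ∧ Prefers L c2 c1)) →
    Prefers v c2 c1 → Prefers v c3 c2

/-- The restriction of a ranking/order `l` to the subset `C` of candidates. -/
def restrictList (C : Finset α) (l : List α) : List α :=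
  l.filter (fun a => decide (a ∈ C))

/-- The plurality score of candidate `c` in the election with candidate set `C`
and votes `V` (each vote a linear order on a set containing `C`): the number of
votes whose most preferred candidate among `C` is `c`. -/
def pluralityScore (C : Finset α) (V : List (List α)) (c : α) : ℕ :=
  V.countP (fun v => decide ((restrictList C v).head? = some c))

/-- `p` is a plurality winner of the election `(C, V)`. -/
def PluralityWinner (C : Finset α) (V : List (List α)) (p : α) : Prop :=
  p ∈ C ∧ ∀ c ∈ C, pluralityScore C V c ≤ pluralityScore C V p

/-- `l'` is obtained from `l` by one swap of adjacent elements. -/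
def AdjSwap (l l' : List α) : Prop :=
  ∃ (u w : List α) (x y : α), l = u ++ x :: y :: w ∧ l' = u ++ y :: x :: w

/-- `WithinSwaps k l l'` : `l` can be transformed into `l'` by a sequence of at
most `k` adjacent swaps. -/
def WithinSwaps : ℕ → List α → List α → Prop
  | 0, l, l' => l = l'
  | (k+1), l, l' => l = l' ∨ ∃ l'', AdjSwap l l'' ∧ WithinSwaps k l'' l'

/-- `v` is swoon-SP w.r.t. axis `L` on candidate set `C`: the restriction of `v` to
`C` minus `v`'s most preferred candidate is single-peaked with respect to the
restriction of `L` to that set. -/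
def SwoonSP (C : Finset α) (L v : List α) : Prop :=
  ∀ t, v.head? = some t →
    SinglePeaked (restrictList (C.erase t) L) (restrictList (C.erase t) v)

/-- The `k`-radius neighborhood of `c` with respect to `C'` and the axis `L`:
if `C'`, listed in `L`-increasing order, is `d_1, ..., d_r` and `c = d_i`, this
is `{d_j : |i - j| ≤ k}`. -/
def nbhd (k : ℕ) (L : List α) (C' : Finset α) (c : α) : Finset α :=
  ((restrictList C' L).drop ((restrictList C' L).idxOf c - k)).take
    ((restrictList C' L).idxOf c + k + 1 - ((restrictList C' L).idxOf c - k))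
    |>.toFinset

/-- The plurality election `(C, V)` is `k`-local with respect to axis `L`. -/
def KLocal (k : ℕ) (L : List α) (C : Finset α) (V : List (List α)) : Prop :=
  ∀ C' ⊆ C, ∀ c ∈ C', pluralityScore (nbhd k L C' c) V c = pluralityScore C' V c

/-- In a `(a1, a2, 0)` scoring election over three candidates, the number of points
candidate `c` receives from (unit-weight) vote `v`. -/
def score3 (a1 a2 : ℕ) (v : List α) (c : α) : ℕ :=
  if v.idxOf c = 0 then a1 else if v.idxOf c = 1 then a2 else 0

/-- Indicator that the vote `v` does not veto (rank last) candidate `c`. -/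
def vetoInd (v : List α) (c : α) : ℕ :=
  if v.getLast? = some c then 0 else 1

/-- The approval score of `c` given approval ballots `W`. -/
def approvalScore {I : Type*} [Fintype I] (W : I → Finset α) (c : α) : ℕ :=
  (Finset.univ.filter fun i => c ∈ W i).card

/-- `p` is an approval winner of the election with candidate set `C` and ballots `W`. -/
def ApprovalWinner (C : Finset α) {I : Type*} [Fintype I] (W : I → Finset α) (p : α) : Prop :=
  p ∈ C ∧ ∀ c ∈ C, approvalScore W c ≤ approvalScore W p


section AuxSC
variable {α : Type*} [DecidableEq α]

lemma pairwise_prefers {l : List α} (h : l.Nodup) : l.Pairwise (Prefers l) := by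
  rw [List.pairwise_iff_getElem]
  intro i j hi hj hij
  unfold Prefers
  rw [List.Nodup.idxOf_getElem h, List.Nodup.idxOf_getElem h]
  exact hij

lemma head_filter_prefers {v : List α} (hv : v.Nodup) {P : α → Bool} {h x : α}
    (hh : (v.filter P).head? = some h) (hx : x ∈ v.filter P) (hne : x ≠ h) :
    Prefers v h x := by
  have hpw : (v.filter P).Pairwise (Prefers v) :=
    (pairwise_prefers hv).sublist List.filter_sublist
  obtain ⟨t, ht⟩ : ∃ t, v.filter P = h :: t := by
    cases e : v.filter P with
    | nil => simp [e] at hh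
    | cons a t => rw [e] at hh; simp at hh; exact ⟨t, by rw [hh]⟩
  rw [ht] at hpw hx
  rcases List.pairwise_cons.1 hpw with ⟨h1, _⟩
  exact h1 x ((List.mem_cons.1 hx).resolve_left hne)

lemma last_filter_prefers {v : List α} (hv : v.Nodup) {P : α → Bool} {h x : α}
    (hh : (v.filter P).getLast? = some h) (hx : x ∈ v.filter P) (hne : x ≠ h) :
    Prefers v x h := by
  have hpw : (v.filter P).reverse.Pairwise (fun a b => Prefers v b a) :=
    List.pairwise_reverse.2 ((pairwise_prefers hv).sublist List.filter_sublist)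
  have hh' : (v.filter P).reverse.head? = some h := by
    rw [List.head?_reverse]; exact hh
  obtain ⟨t, ht⟩ : ∃ t, (v.filter P).reverse = h :: t := by
    cases e : (v.filter P).reverse with
    | nil => simp [e] at hh'
    | cons a t => rw [e] at hh'; simp at hh'; exact ⟨t, by rw [hh']⟩
  have hx' : x ∈ (v.filter P).reverse := List.mem_reverse.2 hx
  rw [ht] at hpw hx'
  rcases List.pairwise_cons.1 hpw with ⟨h1, _⟩
  exact h1 x ((List.mem_cons.1 hx').resolve_left hne)

lemma countP_or_le' {l : List α} (P Q : α → Bool) :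
    l.countP (fun a => P a || Q a) ≤ l.countP P + l.countP Q := by
  induction l with
  | nil => simp
  | cons a t ih =>
    by_cases hP : P a <;> by_cases hQ : Q a <;>
      simp [List.countP_cons, hP, hQ] <;> omega

lemma countP_add_countP_le_length {l : List α} {P Q : α → Bool}
    (h : ∀ a ∈ l, ¬(P a ∧ Q a)) : l.countP P + l.countP Q ≤ l.length := by
  induction l with
  | nil => simp
  | cons a t ih =>
    have ht := ih (fun b hb => h b (List.mem_cons_of_mem a hb))
    have ha := h a (List.mem_cons_self)
    by_cases hP : P a <;> by_cases hQ : Q a <;>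
      simp [List.countP_cons, hP, hQ, List.length_cons] at * <;> omega

lemma mem_restrictList {S : Finset α} {l : List α} {x : α} :
    x ∈ restrictList S l ↔ x ∈ l ∧ x ∈ S := by
  simp [restrictList, List.mem_filter]

/-- The head of a single-caved vote restricted to `S` is an `L`-extreme of `S`. -/
lemma head_restrict_extreme {CA : Finset α} {L v : List α}
    (hL : IsVoteOn CA L) (hv : IsVoteOn CA v) (hsc : SingleCaved L v)
    {S : Finset α} (hS : S ⊆ CA) {h : α}
    (hh : (restrictList S v).head? = some h) :
    (restrictList S L).head? = some h ∨ (restrictList S L).getLast? = some h := by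
  have hhmem : h ∈ restrictList S v := by
    cases e : restrictList S v with
    | nil => rw [e] at hh; simp at hh
    | cons a t => rw [e] at hh; simp at hh; rw [← hh]; exact List.mem_cons_self
  rcases mem_restrictList.1 hhmem with ⟨hhv, hhS⟩
  have hhL : h ∈ L := (hL.2 h).2 ((hv.2 h).1 hhv)
  have hhrL : h ∈ restrictList S L := mem_restrictList.2 ⟨hhL, hhS⟩
  have hrLne : restrictList S L ≠ [] := fun e => by rw [e] at hhrL; simp at hhrL
  obtain ⟨a, t, he⟩ := List.exists_cons_of_ne_nil hrLne
  have ha : (restrictList S L).head? = some a := by rw [he]; rfl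
  have hb' := List.getLast?_eq_getLast hrLne
  set b := (restrictList S L).getLast hrLne with hbdef
  by_cases hha : h = a
  · exact Or.inl (by rw [hha]; exact ha)
  by_cases hhb : h = b
  · exact Or.inr (by rw [hhb]; exact hb')
  exfalso
  have hamem : a ∈ restrictList S L := by rw [he]; exact List.mem_cons_self
  have hbmem : b ∈ restrictList S L := List.getLast_mem hrLne
  rcases mem_restrictList.1 hamem with ⟨haL, haS⟩
  rcases mem_restrictList.1 hbmem with ⟨hbL, hbS⟩
  have hav : a ∈ v := (hv.2 a).2 ((hL.2 a).1 haL)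
  have hbv : b ∈ v := (hv.2 b).2 ((hL.2 b).1 hbL)
  have PLah : Prefers L a h := head_filter_prefers hL.1 ha hhrL hha
  have PLhb : Prefers L h b := last_filter_prefers hL.1 hb' hhrL hhb
  have Pvha : Prefers v h a :=
    head_filter_prefers hv.1 hh (mem_restrictList.2 ⟨hav, haS⟩) (fun e => hha e.symm)
  have Pvbh : Prefers v b h := hsc a h b haL hhL hbL (Or.inl ⟨PLah, PLhb⟩) Pvha
  have Pvhb : Prefers v h b :=
    head_filter_prefers hv.1 hh (mem_restrictList.2 ⟨hbv, hbS⟩) (fun e => hhb e.symm)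
  unfold Prefers at Pvbh Pvhb
  omega

end AuxSC

/-- In a single-caved electorate, some subset `A'` of the spoiler
candidates `A` can be added so that `p` is a plurality winner of `(C ∪ A', V)`
if and only if `p` is already a plurality winner of `(C, V)`. -/
theorem singleCaved_ccac_iff_already_winner
    (C A : Finset α) (hdisj : Disjoint C A) (hC : 2 ≤ C.card)
    (L : List α) (hL : IsVoteOn (C ∪ A) L)
    (V : List (List α))
    (hV : ∀ v ∈ V, IsVoteOn (C ∪ A) v ∧ SingleCaved L v)
    (p : α) (hp : p ∈ C) :
    (∃ A' ⊆ A, PluralityWinner (C ∪ A') V p) ↔ PluralityWinner C V p := by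
  constructor
  · rintro ⟨A', hA', hpS, hwin⟩
    refine ⟨hp, ?_⟩
    intro c hc
    set S := C ∪ A' with hSdef
    have hSsub : S ⊆ C ∪ A :=
      Finset.union_subset (Finset.subset_union_left) (hA'.trans Finset.subset_union_right)
    have hCsub : C ⊆ C ∪ A := Finset.subset_union_left
    have hCS : C ⊆ S := Finset.subset_union_left
    -- head of restriction to C of each vote exists and relates to S-head
    -- F1 : pluralityScore S V p ≤ pluralityScore C V p
    have F1 : pluralityScore S V p ≤ pluralityScore C V p := by
      apply List.countP_mono_left
      intro v hvV hvS
      simp only [decide_eq_true_eq] at hvS ⊢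
      obtain ⟨hvote, -⟩ := hV v hvV
      have hpv : p ∈ v := (hvote.2 p).2 (hCsub hp)
      have hpC : p ∈ restrictList C v := mem_restrictList.2 ⟨hpv, hp⟩
      have hne : restrictList C v ≠ [] := fun e => by rw [e] at hpC; simp at hpC
      obtain ⟨a, t, he⟩ := List.exists_cons_of_ne_nil hne
      have ha : (restrictList C v).head? = some a := by rw [he]; rfl
      have hamem : a ∈ restrictList C v := by rw [he]; exact List.mem_cons_self
      rcases mem_restrictList.1 hamem with ⟨hav, haC⟩
      by_cases hap : a = p
      · rw [ha, hap]
      · exfalso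
        have P1 : Prefers v a p := head_filter_prefers hvote.1 ha hpC (fun e => hap e.symm)
        have P2 : Prefers v p a :=
          head_filter_prefers hvote.1 hvS (mem_restrictList.2 ⟨hav, hCS haC⟩) hap
        unfold Prefers at P1 P2; omega
    -- F3 : V.length ≤ 2 * pluralityScore S V p
    have F3 : V.length ≤ 2 * pluralityScore S V p := by
      have hpSL : p ∈ restrictList S L := by
        refine mem_restrictList.2 ⟨(hL.2 p).2 (hCsub hp), hCS hp⟩
      have hrLne : restrictList S L ≠ [] := fun e => by rw [e] at hpSL; simp at hpSL
      obtain ⟨e1, t1, he1⟩ := List.exists_cons_of_ne_nil hrLne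
      have he1' : (restrictList S L).head? = some e1 := by rw [he1]; rfl
      have he2' := List.getLast?_eq_getLast hrLne
      set e2 := (restrictList S L).getLast hrLne with he2def
      have he1mem : e1 ∈ restrictList S L := by rw [he1]; exact List.mem_cons_self
      have he2mem : e2 ∈ restrictList S L := List.getLast_mem hrLne
      have he1S : e1 ∈ S := (mem_restrictList.1 he1mem).2
      have he2S : e2 ∈ S := (mem_restrictList.1 he2mem).2
      have hall : V.length = V.countP (fun v =>
          decide ((restrictList S v).head? = some e1) ||
          decide ((restrictList S v).head? = some e2)) := by
        symm
        rw [List.countP_eq_length]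
        intro v hvV
        obtain ⟨hvote, hcaved⟩ := hV v hvV
        have hpv : p ∈ v := (hvote.2 p).2 (hCsub hp)
        have hpSv : p ∈ restrictList S v := mem_restrictList.2 ⟨hpv, hCS hp⟩
        have hne : restrictList S v ≠ [] := fun e => by rw [e] at hpSv; simp at hpSv
        obtain ⟨a, t, he⟩ := List.exists_cons_of_ne_nil hne
        have ha : (restrictList S v).head? = some a := by rw [he]; rfl
        rcases head_restrict_extreme hL hvote hcaved hSsub ha with h1 | h1
        · simp [ha, h1.symm.trans he1']
        · simp [ha, h1.symm.trans he2']
      calc V.length ≤ V.countP (fun v => decide ((restrictList S v).head? = some e1))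
              + V.countP (fun v => decide ((restrictList S v).head? = some e2)) := by
              rw [hall]; exact countP_or_le' _ _
        _ ≤ pluralityScore S V p + pluralityScore S V p :=
              Nat.add_le_add (hwin e1 he1S) (hwin e2 he2S)
        _ = 2 * pluralityScore S V p := by omega
    by_cases hcp : c = p
    · rw [hcp]
    -- F2 : pluralityScore C V c + pluralityScore S V p ≤ V.length
    have F2 : pluralityScore C V c + pluralityScore S V p ≤ V.length := by
      apply countP_add_countP_le_length
      intro v hvV ⟨h1, h2⟩
      simp only [decide_eq_true_eq] at h1 h2
      obtain ⟨hvote, -⟩ := hV v hvV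
      have hpv : p ∈ v := (hvote.2 p).2 (hCsub hp)
      have hcv : c ∈ v := (hvote.2 c).2 (hCsub hc)
      have P1 : Prefers v c p :=
        head_filter_prefers hvote.1 h1 (mem_restrictList.2 ⟨hpv, hp⟩) (Ne.symm hcp)
      have P2 : Prefers v p c :=
        head_filter_prefers hvote.1 h2 (mem_restrictList.2 ⟨hcv, hCS hc⟩) hcp
      unfold Prefers at P1 P2; omega
    omega
  · intro hwin
    exact ⟨∅, Finset.empty_subset A, by rw [Finset.union_empty]; exact hwin⟩
end

section
/- Let C be a finite candidate set, L a linear order on C, k a nonnegative integer, and v a linear-order vote on C that is single-peaked with respect to some linear order L' on C that is within k adjacent swaps of L. Then for every subset C' ⊆ C, the restriction of v to C' is single-peaked with respect to some linear order on C' that is within k adjacent swaps of the restriction of L to C'. -/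
variable {α : Type*} [DecidableEq α]

theorem indexOf_lt_iff_sublist {l : List α} (hl : l.Nodup) {a b : α}
    (ha : a ∈ l) (hb : b ∈ l) :
    l.idxOf a < l.idxOf b ↔ List.Sublist [a, b] l := by
  induction l with
  | nil => simp at ha
  | cons c t ih =>
    rcases List.nodup_cons.mp hl with ⟨hct, htn⟩
    by_cases hac : a = c
    · subst hac
      by_cases hbc : b = a
      · subst hbc
        simp only [lt_irrefl, false_iff]
        intro h
        cases h with
        | cons _ h => exact hct (h.subset (show b ∈ [b, b] by simp))
        | cons_cons _ h => exact hct (h.subset (show b ∈ [b] by simp))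
      · have hbt : b ∈ t := by
          rcases List.mem_cons.mp hb with h | h; · exact absurd h hbc
          · exact h
        simp only [List.idxOf_cons_self]
        constructor
        · intro _; exact List.Sublist.cons₂ a ((List.singleton_sublist).mpr hbt)
        · intro _
          rw [List.idxOf_cons_ne _ (Ne.symm hbc)]
          omega
    · have hat : a ∈ t := by
        rcases List.mem_cons.mp ha with h | h; · exact absurd h hac
        · exact h
      by_cases hbc : b = c
      · subst hbc
        simp only [List.idxOf_cons_self, List.idxOf_cons_ne _ (Ne.symm hac)]
        constructor
        · omega
        · intro h
          cases h with
          | cons _ h => exact absurd (h.subset (show b ∈ [a, b] by simp)) hct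
          | cons_cons _ h => exact absurd rfl hac
      · rw [List.idxOf_cons_ne _ (Ne.symm hac), List.idxOf_cons_ne _ (Ne.symm hbc)]
        have hbt : b ∈ t := by
          rcases List.mem_cons.mp hb with h | h; · exact absurd h hbc
          · exact h
        rw [Nat.succ_lt_succ_iff, ih htn hat hbt]
        constructor
        · exact fun h => h.cons c
        · intro h
          cases h with
          | cons _ h => exact h
          | cons_cons _ h => exact absurd rfl hac



theorem prefers_filter_iff (p : α → Bool) {l : List α} (hl : l.Nodup) {a b : α}
    (ha : a ∈ l.filter p) (hb : b ∈ l.filter p) :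
    Prefers (l.filter p) a b ↔ Prefers l a b := by
  have hnd := hl.filter p
  have ha' := List.mem_filter.mp ha
  have hb' := List.mem_filter.mp hb
  rw [Prefers, Prefers, indexOf_lt_iff_sublist hnd ha hb,
    indexOf_lt_iff_sublist hl ha'.1 hb'.1]
  constructor
  · exact fun h => h.trans List.filter_sublist
  · intro h
    have h2 := h.filter p
    simpa [List.filter_cons, ha'.2, hb'.2] using h2

theorem adjSwap_filter (p : α → Bool) {l l' : List α} (h : AdjSwap l l') :
    AdjSwap (l.filter p) (l'.filter p) ∨ l.filter p = l'.filter p := by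
  obtain ⟨u, w, x, y, h1, h2⟩ := h
  subst h1; subst h2
  by_cases px : p x = true <;> by_cases py : p y = true
  · exact Or.inl ⟨u.filter p, w.filter p, x, y,
      by simp [List.filter_append, List.filter_cons, px, py],
      by simp [List.filter_append, List.filter_cons, px, py]⟩
  all_goals right; simp [List.filter_append, List.filter_cons, px, py]

theorem withinSwaps_succ {k : ℕ} {l l' : List α} (h : WithinSwaps k l l') :
    WithinSwaps (k + 1) l l' := by
  induction k generalizing l with
  | zero => exact Or.inl h
  | succ k ih =>
    rcases h with h | ⟨m, hm, hw⟩
    · exact Or.inl h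
    · exact Or.inr ⟨m, hm, ih hw⟩

theorem withinSwaps_filter (p : α → Bool) {k : ℕ} {l l' : List α}
    (h : WithinSwaps k l l') : WithinSwaps k (l.filter p) (l'.filter p) := by
  induction k generalizing l with
  | zero => exact congrArg _ h
  | succ k ih =>
    rcases h with h | ⟨m, hm, hw⟩
    · exact Or.inl (congrArg _ h)
    · rcases adjSwap_filter p hm with h' | h'
      · exact Or.inr ⟨m.filter p, h', ih hw⟩
      · rw [h']
        exact withinSwaps_succ (ih hw)

/-- Being single-peaked w.r.t. some order within `k` adjacent swaps of the
societal axis `L` is preserved under restriction to any subset `C'` of the candidates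
(restricting both the vote and the societal axis). -/
theorem perceptionFlipSP_restriction
    (C : Finset α) (L v : List α) (k : ℕ)
    (hL : IsVoteOn C L) (hv : IsVoteOn C v)
    (h : ∃ L', IsVoteOn C L' ∧ WithinSwaps k L L' ∧ SinglePeaked L' v) :
    ∀ C' ⊆ C, ∃ M, IsVoteOn C' M ∧ WithinSwaps k (restrictList C' L) M ∧
      SinglePeaked M (restrictList C' v) := by
  intro C' hC'
  obtain ⟨L', hL', hW, hSP⟩ := h
  refine ⟨restrictList C' L', ⟨hL'.1.filter _, ?_⟩, withinSwaps_filter _ hW, ?_⟩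
  · intro a
    simp only [restrictList, List.mem_filter, decide_eq_true_eq]
    constructor
    · rintro ⟨_, h⟩; exact h
    · intro h; exact ⟨(hL'.2 a).mpr (hC' h), h⟩
  · intro c1 c2 c3 h1 h2 h3 hmid hp12
    have p := fun a => decide (a ∈ C')
    have hm1 := List.mem_filter.mp h1
    have hm2 := List.mem_filter.mp h2
    have hm3 := List.mem_filter.mp h3
    have hvmem : ∀ c, c ∈ L' → c ∈ C' → c ∈ v.filter (fun a => decide (a ∈ C')) := by
      intro c hcl hcc
      exact List.mem_filter.mpr ⟨(hv.2 c).mpr ((hL'.2 c).mp hcl), by simpa using hcc⟩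
    have hc1 : c1 ∈ C' := by simpa using hm1.2
    have hc2 : c2 ∈ C' := by simpa using hm2.2
    have hc3 : c3 ∈ C' := by simpa using hm3.2
    have hv1 := hvmem c1 hm1.1 hc1
    have hv2 := hvmem c2 hm2.1 hc2
    have hv3 := hvmem c3 hm3.1 hc3
    have eL12 := prefers_filter_iff _ hL'.1 h1 h2
    have eL23 := prefers_filter_iff _ hL'.1 h2 h3
    have eL32 := prefers_filter_iff _ hL'.1 h3 h2
    have eL21 := prefers_filter_iff _ hL'.1 h2 h1
    have ev12 := prefers_filter_iff _ hv.1 hv1 hv2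
    have ev23 := prefers_filter_iff _ hv.1 hv2 hv3
    have hmid' : (Prefers L' c1 c2 ∧ Prefers L' c2 c3) ∨
        (Prefers L' c3 c2 ∧ Prefers L' c2 c1) := by
      rcases hmid with ⟨a, b⟩ | ⟨a, b⟩
      · exact Or.inl ⟨eL12.mp a, eL23.mp b⟩
      · exact Or.inr ⟨eL32.mp a, eL21.mp b⟩
    exact ev23.mpr (hSP c1 c2 c3 hm1.1 hm2.1 hm3.1 hmid' (ev12.mp hp12))
end
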